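/- Let S be a positive semidomain (a subsemiring of the real numbers all of whose elements are nonnegative). If the additive monoid (S, +) has at least one atom, then every multiplicative unit of S (every u ∈ S such that u·v = 1 for some v ∈ S) is an atom of the additive monoid (S, +). -/
import Mathlib

/-- In a positive semidomain (a subsemiring of `ℝ` all of whose elements are
nonnegative), if the additive monoid has at least one atom, then every
multiplicative unit of the semidomain is an additive atom. -/
theorem units_are_additive_atoms (S : Subsemiring ℝ) (hS : ∀ x ∈ S, (0 : ℝ) ≤ x)
    (hex : ∃ a ∈ S, a ≠ 0 ∧ ∀ x ∈ S, ∀ y ∈ S, a = x + y → x = 0 ∨ y = 0)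
    (u : ℝ) (hu : u ∈ S) (hunit : ∃ v ∈ S, u * v = 1) :
    u ≠ 0 ∧ ∀ x ∈ S, ∀ y ∈ S, u = x + y → x = 0 ∨ y = 0 := by
  obtain ⟨v, hv, huv⟩ := hunit
  obtain ⟨a, ha, ha0, hatom⟩ := hex
  have hv0 : v ≠ 0 := by intro h; simp [h] at huv
  constructor
  · intro h; simp [h] at huv
  · intro x hx y hy hxy
    have key : a = x * (a * v) + y * (a * v) := by
      have : (x + y) * v = 1 := by rw [← hxy]; exact huv
      calc a = a * ((x + y) * v) := by rw [this, mul_one]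
        _ = x * (a * v) + y * (a * v) := by ring
    have h1 : x * (a * v) ∈ S := S.mul_mem hx (S.mul_mem ha hv)
    have h2 : y * (a * v) ∈ S := S.mul_mem hy (S.mul_mem ha hv)
    have hav : a * v ≠ 0 := mul_ne_zero ha0 hv0
    rcases hatom _ h1 _ h2 key with h | h
    · exact Or.inl ((mul_eq_zero.mp h).resolve_right hav)
    · exact Or.inr ((mul_eq_zero.mp h).resolve_right hav)
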